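/- arXiv:2004.12567 — 5 statements merged into one kernel-verified Lean document; each statement's English description precedes it below -/
import Mathlib

section
/- (Theorem 1, forward inclusion.) Let A be a real n×n matrix, B a real n×m matrix, and Ξ a real n×q matrix. Let Γ = [−B Ξ] be the n×(m+q) horizontal block concatenation, let G be a Moore–Penrose pseudoinverse of Γ, and set Q_X = [I_m 0] G A and Q_Λ = [I_m 0](I − G Γ), where [I_m 0] denotes the m×(m+q) matrix selecting the first block of rows. Suppose X is a real n×n matrix with Γ G (A X) = A X. Then for every real (m+q)×n matrix Λ, the matrix Û = Q_X X + Q_Λ Λ satisfies: there exists a real q×n matrix Θ with A X + B Û = Ξ Θ. -/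
open Matrix

/-- `G` is a Moore–Penrose pseudoinverse of `Γ`: the four Penrose equations hold. -/
def IsMoorePenroseInv {m k : Type*} [Fintype m] [Fintype k]
    (Γ : Matrix m k ℝ) (G : Matrix k m ℝ) : Prop :=
  Γ * G * Γ = Γ ∧ G * Γ * G = G ∧ (Γ * G)ᵀ = Γ * G ∧ (G * Γ)ᵀ = G * Γ

theorem feasible_set_forward (n m q : ℕ)
    (A : Matrix (Fin n) (Fin n) ℝ) (B : Matrix (Fin n) (Fin m) ℝ)
    (Ξ : Matrix (Fin n) (Fin q) ℝ)
    (Γ : Matrix (Fin n) (Fin m ⊕ Fin q) ℝ) (hΓ : Γ = Matrix.fromCols (-B) Ξ)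
    (G : Matrix (Fin m ⊕ Fin q) (Fin n) ℝ) (hG : IsMoorePenroseInv Γ G)
    (E : Matrix (Fin m) (Fin m ⊕ Fin q) ℝ)
    (hE : E = Matrix.fromCols (1 : Matrix (Fin m) (Fin m) ℝ)
      (0 : Matrix (Fin m) (Fin q) ℝ))
    (QX : Matrix (Fin m) (Fin n) ℝ) (hQX : QX = E * G * A)
    (QΛ : Matrix (Fin m) (Fin m ⊕ Fin q) ℝ) (hQΛ : QΛ = E * (1 - G * Γ))
    (X : Matrix (Fin n) (Fin n) ℝ)
    (hX : Γ * G * (A * X) = A * X) :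
    ∀ Λ : Matrix (Fin m ⊕ Fin q) (Fin n) ℝ,
      ∃ Θ : Matrix (Fin q) (Fin n) ℝ,
        A * X + B * (QX * X + QΛ * Λ) = Ξ * Θ := by
  intro Λ
  obtain ⟨h1, -, -, -⟩ := hG
  set F : Matrix (Fin q) (Fin m ⊕ Fin q) ℝ :=
    Matrix.fromCols (0 : Matrix (Fin q) (Fin m) ℝ) (1 : Matrix (Fin q) (Fin q) ℝ) with hF
  set V : Matrix (Fin m ⊕ Fin q) (Fin n) ℝ := G * (A * X) + (1 - G * Γ) * Λ with hV
  refine ⟨F * V, ?_⟩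
  have hGE : Γ * Eᵀ = -B := by
    rw [hΓ, hE, Matrix.transpose_fromCols, Matrix.fromCols_mul_fromRows]
    simp
  have hGF : Γ * Fᵀ = Ξ := by
    rw [hΓ, hF, Matrix.transpose_fromCols, Matrix.fromCols_mul_fromRows]
    simp
  have hEF : Eᵀ * E + Fᵀ * F = 1 := by
    ext (i | i) (j | j) <;>
      simp [hE, hF, Matrix.transpose_apply, Matrix.mul_apply, Matrix.one_apply, eq_comm]
  have hGV : Γ * V = A * X := by
    have h2 : Γ * (1 - G * Γ) = 0 := by
      rw [Matrix.mul_sub, Matrix.mul_one, ← Matrix.mul_assoc, h1, sub_self]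
    rw [hV, Matrix.mul_add, ← Matrix.mul_assoc Γ G, hX, ← Matrix.mul_assoc Γ, h2,
      Matrix.zero_mul, add_zero]
  have hU : QX * X + QΛ * Λ = E * V := by
    rw [hQX, hQΛ, hV, Matrix.mul_add, Matrix.mul_assoc, Matrix.mul_assoc, Matrix.mul_assoc]
  rw [hU]
  have hB : B * (E * V) = Ξ * (F * V) - A * X := by
    have hEE : Eᵀ * E = 1 - Fᵀ * F := by rw [← hEF]; abel
    calc B * (E * V) = -(Γ * Eᵀ) * (E * V) := by rw [hGE, neg_neg]
      _ = -(Γ * (Eᵀ * E * V)) := by simp [Matrix.mul_assoc]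
      _ = -(Γ * ((1 - Fᵀ * F) * V)) := by rw [hEE]
      _ = -(Γ * V - Γ * Fᵀ * (F * V)) := by
          rw [Matrix.sub_mul, Matrix.one_mul, Matrix.mul_sub]
          simp [Matrix.mul_assoc]
      _ = Ξ * (F * V) - A * X := by rw [hGV, hGF]; abel
  rw [hB]
  abel
end

section
/- (Theorem 1, reverse inclusion.) Let A be a real n×n matrix, B a real n×m matrix, and Ξ a real n×q matrix. Let Γ = [−B Ξ] be the n×(m+q) horizontal block concatenation, let G be a Moore–Penrose pseudoinverse of Γ, and set Q_X = [I_m 0] G A and Q_Λ = [I_m 0](I − G Γ). Let X be a real n×n matrix. If a real m×n matrix Û satisfies A X + B Û = Ξ Θ for some real q×n matrix Θ, then there exists a real (m+q)×n matrix Λ such that Û = Q_X X + Q_Λ Λ. -/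
open Matrix

theorem feasible_set_reverse (n m q : ℕ)
    (A : Matrix (Fin n) (Fin n) ℝ) (B : Matrix (Fin n) (Fin m) ℝ)
    (Ξ : Matrix (Fin n) (Fin q) ℝ)
    (Γ : Matrix (Fin n) (Fin m ⊕ Fin q) ℝ) (hΓ : Γ = Matrix.fromCols (-B) Ξ)
    (G : Matrix (Fin m ⊕ Fin q) (Fin n) ℝ) (hG : IsMoorePenroseInv Γ G)
    (E : Matrix (Fin m) (Fin m ⊕ Fin q) ℝ)
    (hE : E = Matrix.fromCols (1 : Matrix (Fin m) (Fin m) ℝ)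
      (0 : Matrix (Fin m) (Fin q) ℝ))
    (QX : Matrix (Fin m) (Fin n) ℝ) (hQX : QX = E * G * A)
    (QΛ : Matrix (Fin m) (Fin m ⊕ Fin q) ℝ) (hQΛ : QΛ = E * (1 - G * Γ))
    (X : Matrix (Fin n) (Fin n) ℝ)
    (U : Matrix (Fin m) (Fin n) ℝ)
    (hU : ∃ Θ : Matrix (Fin q) (Fin n) ℝ, A * X + B * U = Ξ * Θ) :
    ∃ Λ : Matrix (Fin m ⊕ Fin q) (Fin n) ℝ, U = QX * X + QΛ * Λ := by
  obtain ⟨Θ, hΘ⟩ := hU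
  refine ⟨Matrix.fromRows U Θ, ?_⟩
  set Z := Matrix.fromRows U Θ with hZ
  have hΓZ : Γ * Z = A * X := by
    rw [hΓ, hZ, Matrix.fromCols_mul_fromRows, Matrix.neg_mul, ← hΘ]
    abel
  have hEZ : E * Z = U := by
    rw [hE, hZ, Matrix.fromCols_mul_fromRows, Matrix.one_mul, Matrix.zero_mul, add_zero]
  rw [hQX, hQΛ]
  calc U = E * Z := hEZ.symm
    _ = E * G * A * X + E * (1 - G * Γ) * Z := by
        rw [Matrix.mul_sub, Matrix.mul_one, Matrix.sub_mul,
          Matrix.mul_assoc E (G*Γ) Z, Matrix.mul_assoc G Γ Z, hΓZ,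
          Matrix.mul_assoc (E*G) A X, Matrix.mul_assoc E G (A*X)]
        abel
end

section
/- (Theorem 1, necessity of the null-space condition.) Let A be a real n×n matrix, B a real n×m matrix, Ξ a real n×q matrix, Γ = [−B Ξ] the horizontal block concatenation, and G a Moore–Penrose pseudoinverse of Γ. Let X be a real n×n matrix. If there exist matrices Û (m×n) and Θ (q×n) with A X + B Û = Ξ Θ, then (Γ G − I) A X = 0, i.e., every column of X lies in null(Ψ_x) for Ψ_x = (Γ G − I) A. -/
open Matrix

theorem null_space_condition_necessary (n m q : ℕ)
    (A : Matrix (Fin n) (Fin n) ℝ) (B : Matrix (Fin n) (Fin m) ℝ)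
    (Ξ : Matrix (Fin n) (Fin q) ℝ)
    (Γ : Matrix (Fin n) (Fin m ⊕ Fin q) ℝ) (hΓ : Γ = Matrix.fromCols (-B) Ξ)
    (G : Matrix (Fin m ⊕ Fin q) (Fin n) ℝ) (hG : IsMoorePenroseInv Γ G)
    (X : Matrix (Fin n) (Fin n) ℝ)
    (hU : ∃ (U : Matrix (Fin m) (Fin n) ℝ) (Θ : Matrix (Fin q) (Fin n) ℝ),
      A * X + B * U = Ξ * Θ) :
    (Γ * G - 1) * A * X = 0 ∧
      ∀ j : Fin n, ((Γ * G - 1) * A).mulVec (fun i => X i j) = 0 := by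
  obtain ⟨U, Θ, h⟩ := hU
  have hAX : A * X = Γ * Matrix.fromRows U Θ := by
    rw [hΓ, Matrix.fromCols_mul_fromRows, Matrix.neg_mul, eq_sub_of_add_eq h, sub_eq_neg_add]
  have h0 : (Γ * G - 1) * A * X = 0 := by
    rw [mul_assoc, hAX, sub_mul, one_mul, ← Matrix.mul_assoc, hG.1, sub_self]
  refine ⟨h0, fun j => ?_⟩
  funext i
  have := congrFun (congrFun h0 i) j
  simpa [Matrix.mul_apply, Matrix.mulVec, dotProduct] using this
end

section
/- Let P be a real symmetric positive semidefinite n×n matrix, and let C_X (p×n), D_Λ (p×k), A_X (n×n), B_Λ (n×k), X (n×n) be real matrices. Suppose M = D_Λᵀ D_Λ + B_Λᵀ P B_Λ is invertible, and set L = −M⁻¹ (D_Λᵀ C_X + B_Λᵀ P A_X). Then Λ* = L X is a global minimizer of f(Λ) = ‖C_X X + D_Λ Λ‖_F² + tr((A_X X + B_Λ Λ)ᵀ P (A_X X + B_Λ Λ)) over all real k×n matrices Λ. -/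
open Matrix

/-- The squared Frobenius norm: the sum of squares of all entries. -/
def frobSq {a b : ℕ} (M : Matrix (Fin a) (Fin b) ℝ) : ℝ := ∑ i, ∑ j, (M i j) ^ 2

lemma frobSq_eq_trace {a b : ℕ} (A : Matrix (Fin a) (Fin b) ℝ) :
    frobSq A = Matrix.trace (Aᵀ * A) := by
  simp [frobSq, Matrix.trace, Matrix.diag, Matrix.mul_apply, sq]
  rw [Finset.sum_comm]

lemma trace_psd_nonneg {m c : ℕ} (P : Matrix (Fin m) (Fin m) ℝ) (hP : P.PosSemidef)
    (Y : Matrix (Fin m) (Fin c) ℝ) : 0 ≤ Matrix.trace (Yᵀ * P * Y) := by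
  have hQ : (Yᵀ * P * Y).PosSemidef := by
    have := hP.conjTranspose_mul_mul_same Y
    simpa using this
  have hdiag : ∀ j, 0 ≤ (Yᵀ * P * Y) j j := by
    intro j
    have := hQ.dotProduct_mulVec_nonneg (Pi.single j 1)
    simpa [dotProduct, Matrix.mulVec, Pi.single_apply] using this
  exact Finset.sum_nonneg fun j _ => hdiag j

lemma quad_expand {m c : ℕ} (P : Matrix (Fin m) (Fin m) ℝ) (hP : Pᵀ = P)
    (W Y : Matrix (Fin m) (Fin c) ℝ) :
    Matrix.trace ((W + Y)ᵀ * P * (W + Y)) =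
      Matrix.trace (Wᵀ * P * W) + Matrix.trace (Yᵀ * P * Y)
        + 2 * Matrix.trace (Yᵀ * (P * W)) := by
  have h1 : Matrix.trace (Wᵀ * P * Y) = Matrix.trace (Yᵀ * (P * W)) := by
    rw [← Matrix.trace_transpose (Wᵀ * P * Y)]
    simp [Matrix.transpose_mul, hP, Matrix.mul_assoc]
  simp only [Matrix.transpose_add, Matrix.add_mul, Matrix.mul_add, Matrix.trace_add]
  rw [h1]
  rw [show Yᵀ * P * W = Yᵀ * (P * W) from Matrix.mul_assoc _ _ _]
  ring

lemma quad_expand' {m c : ℕ} (W Y : Matrix (Fin m) (Fin c) ℝ) :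
    Matrix.trace ((W + Y)ᵀ * (W + Y)) =
      Matrix.trace (Wᵀ * W) + Matrix.trace (Yᵀ * Y) + 2 * Matrix.trace (Yᵀ * W) := by
  have h1 : Matrix.trace (Wᵀ * Y) = Matrix.trace (Yᵀ * W) := by
    rw [← Matrix.trace_transpose (Wᵀ * Y)]
    simp [Matrix.transpose_mul]
  simp only [Matrix.transpose_add, Matrix.add_mul, Matrix.mul_add, Matrix.trace_add]
  rw [h1]; ring

theorem closed_form_minimizer (n p k : ℕ)
    (P : Matrix (Fin n) (Fin n) ℝ) (hP : P.PosSemidef)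
    (CX : Matrix (Fin p) (Fin n) ℝ) (DΛ : Matrix (Fin p) (Fin k) ℝ)
    (AX : Matrix (Fin n) (Fin n) ℝ) (BΛ : Matrix (Fin n) (Fin k) ℝ)
    (X : Matrix (Fin n) (Fin n) ℝ)
    (M : Matrix (Fin k) (Fin k) ℝ) (hM : M = DΛᵀ * DΛ + BΛᵀ * P * BΛ)
    (hMinv : IsUnit M)
    (L : Matrix (Fin k) (Fin n) ℝ) (hL : L = -(M⁻¹ * (DΛᵀ * CX + BΛᵀ * P * AX)))
    (f : Matrix (Fin k) (Fin n) ℝ → ℝ)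
    (hf : f = fun Λ => frobSq (CX * X + DΛ * Λ) +
      Matrix.trace ((AX * X + BΛ * Λ)ᵀ * P * (AX * X + BΛ * Λ))) :
    ∀ Λ : Matrix (Fin k) (Fin n) ℝ, f (L * X) ≤ f Λ := by
  intro Λ
  have hPt : Pᵀ = P := by simpa using hP.isHermitian.eq
  set Λ₀ : Matrix (Fin k) (Fin n) ℝ := L * X with hΛ₀
  set E : Matrix (Fin k) (Fin n) ℝ := Λ - Λ₀ with hEdef
  have hΛ : Λ = Λ₀ + E := by rw [hEdef]; abel
  set W₁ : Matrix (Fin p) (Fin n) ℝ := CX * X + DΛ * Λ₀ with hW₁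
  set W₂ : Matrix (Fin n) (Fin n) ℝ := AX * X + BΛ * Λ₀ with hW₂
  -- stationarity
  have hML : M * L = -(DΛᵀ * CX + BΛᵀ * P * AX) := by
    rw [hL, Matrix.mul_neg, ← Matrix.mul_assoc,
      Matrix.mul_nonsing_inv _ ((Matrix.isUnit_iff_isUnit_det M).mp hMinv), Matrix.one_mul]
  have h1 : M * Λ₀ = -((DΛᵀ * CX + BΛᵀ * P * AX) * X) := by
    rw [hΛ₀, ← Matrix.mul_assoc, hML, Matrix.neg_mul]
  have hst : DΛᵀ * W₁ + BΛᵀ * P * W₂ = 0 := by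
    have h2 : DΛᵀ * W₁ + BΛᵀ * P * W₂
        = (DΛᵀ * CX + BΛᵀ * P * AX) * X + M * Λ₀ := by
      rw [hW₁, hW₂, hM]
      simp only [Matrix.mul_add, Matrix.add_mul, Matrix.mul_assoc]
      abel
    rw [h2, h1, add_neg_cancel]
  have hcross : Matrix.trace ((DΛ * E)ᵀ * W₁) + Matrix.trace ((BΛ * E)ᵀ * (P * W₂)) = 0 := by
    rw [Matrix.transpose_mul, Matrix.transpose_mul, Matrix.mul_assoc, Matrix.mul_assoc,
      ← Matrix.trace_add, ← Matrix.mul_add]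
    have hst' : DΛᵀ * W₁ + BΛᵀ * (P * W₂) = 0 := by
      rw [← Matrix.mul_assoc]; exact hst
    rw [hst', Matrix.mul_zero, Matrix.trace_zero]
  have hq1 : 0 ≤ Matrix.trace ((DΛ * E)ᵀ * (DΛ * E)) := by
    rw [← frobSq_eq_trace]
    exact Finset.sum_nonneg fun i _ => Finset.sum_nonneg fun j _ => sq_nonneg _
  have hq2 : 0 ≤ Matrix.trace ((BΛ * E)ᵀ * P * (BΛ * E)) := trace_psd_nonneg P hP _
  rw [hf]
  simp only
  rw [frobSq_eq_trace, frobSq_eq_trace, hΛ]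
  have e1 : CX * X + DΛ * (Λ₀ + E) = W₁ + DΛ * E := by
    rw [hW₁, Matrix.mul_add]; abel
  have e2 : AX * X + BΛ * (Λ₀ + E) = W₂ + BΛ * E := by
    rw [hW₂, Matrix.mul_add]; abel
  rw [e1, e2, quad_expand' W₁ (DΛ * E), quad_expand P hPt W₂ (BΛ * E)]
  linarith
end

section
/- (Boundary-condition correctness of the DP backward recursion, Algorithm 1.) Let A be a real n×n matrix, B a real n×m matrix, and T ≥ 1. Suppose given real n×q matrices Ξ[1], ..., Ξ[T+1] with Ξ[T+1] = 0, and for each τ = 1, ..., T let Γ[τ] = [−B Ξ[τ+1]] (horizontal block concatenation), let G[τ] be a Moore–Penrose pseudoinverse of Γ[τ], and assume the range of the linear map θ ↦ Ξ[τ] θ equals {v ∈ ℝⁿ : Γ[τ] G[τ] (A v) = A v}. Let X[1], ..., X[T+1] (n×n) and U[1], ..., U[T] (m×n) satisfy: every column of X[1] lies in the range of θ ↦ Ξ[1] θ; X[τ+1] = A X[τ] + B U[τ] for all τ; and for each τ there exists a real (m+q)×n matrix Λ[τ] with U[τ] = [I_m 0] G[τ] A X[τ] + [I_m 0](I − G[τ]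 Γ[τ]) Λ[τ]. Then A X[T] + B U[T] = 0. -/
open Matrix

private lemma col_mul {n m k : Type*} [Fintype m] (M : Matrix n m ℝ)
    (N : Matrix m k ℝ) (j : k) (i : n) :
    (M * N) i j = M.mulVec (fun i => N i j) i := by
  simp [Matrix.mul_apply, Matrix.mulVec, dotProduct]

theorem dp_boundary_condition_correct (n m q T : ℕ) (hT : 1 ≤ T)
    (A : Matrix (Fin n) (Fin n) ℝ) (B : Matrix (Fin n) (Fin m) ℝ)
    (Ξ : ℕ → Matrix (Fin n) (Fin q) ℝ) (hΞT : Ξ (T + 1) = 0)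
    (Γ : ℕ → Matrix (Fin n) (Fin m ⊕ Fin q) ℝ)
    (hΓ : ∀ τ, 1 ≤ τ → τ ≤ T → Γ τ = Matrix.fromCols (-B) (Ξ (τ + 1)))
    (G : ℕ → Matrix (Fin m ⊕ Fin q) (Fin n) ℝ)
    (hG : ∀ τ, 1 ≤ τ → τ ≤ T → IsMoorePenroseInv (Γ τ) (G τ))
    (hrange : ∀ τ, 1 ≤ τ → τ ≤ T →
      Set.range (Ξ τ).mulVec =
        {v : Fin n → ℝ | (Γ τ).mulVec ((G τ).mulVec (A.mulVec v)) = A.mulVec v})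
    (E : Matrix (Fin m) (Fin m ⊕ Fin q) ℝ)
    (hE : E = Matrix.fromCols (1 : Matrix (Fin m) (Fin m) ℝ)
      (0 : Matrix (Fin m) (Fin q) ℝ))
    (X : ℕ → Matrix (Fin n) (Fin n) ℝ) (U : ℕ → Matrix (Fin m) (Fin n) ℝ)
    (hX1 : ∀ j : Fin n, (fun i => X 1 i j) ∈ Set.range (Ξ 1).mulVec)
    (hdyn : ∀ τ, 1 ≤ τ → τ ≤ T → X (τ + 1) = A * X τ + B * U τ)
    (hU : ∀ τ, 1 ≤ τ → τ ≤ T → ∃ Λ : Matrix (Fin m ⊕ Fin q) (Fin n) ℝ,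
      U τ = E * G τ * A * X τ + E * (1 - G τ * Γ τ) * Λ) :
    A * X T + B * U T = 0 := by
  -- key induction: every column of X τ lies in the range of (Ξ τ).mulVec
  have main : ∀ τ, 1 ≤ τ → τ ≤ T + 1 →
      ∀ j : Fin n, (fun i => X τ i j) ∈ Set.range (Ξ τ).mulVec := by
    intro τ h1
    induction τ, h1 using Nat.le_induction with
    | base => intro _ j; exact hX1 j
    | succ τ hτ ih =>
      intro hle j
      have hτT : τ ≤ T := by omega
      have ihj := ih (by omega) j
      -- column of X τ
      set x : Fin n → ℝ := fun i => X τ i j with hx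
      obtain ⟨Λ, hΛ⟩ := hU τ hτ hτT
      obtain ⟨hP1, _, _, _⟩ := hG τ hτ hτT
      have hrx : (Γ τ).mulVec ((G τ).mulVec (A.mulVec x)) = A.mulVec x := by
        have := (hrange τ hτ hτT) ▸ ihj
        exact this
      set w : Fin m ⊕ Fin q → ℝ :=
        (G τ).mulVec (A.mulVec x) + (1 - G τ * Γ τ).mulVec (fun i => Λ i j) with hw
      have hΓw : (Γ τ).mulVec w = A.mulVec x := by
        rw [hw, Matrix.mulVec_add, hrx, Matrix.mulVec_mulVec]
        have : Γ τ * (1 - G τ * Γ τ) = 0 := by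
          rw [Matrix.mul_sub, Matrix.mul_one, ← Matrix.mul_assoc, hP1, sub_self]
        rw [this, Matrix.zero_mulVec, add_zero]
      -- column of U τ equals E *ᵥ w
      have hu : (fun i => U τ i j) = E.mulVec w := by
        funext i
        rw [hΛ, Matrix.add_apply, col_mul (E * G τ * A) (X τ) j i,
          col_mul (E * (1 - G τ * Γ τ)) Λ j i, hw, Matrix.mulVec_add]
        simp only [Matrix.mulVec_mulVec, Pi.add_apply, Matrix.mul_assoc]
        rfl
      -- E *ᵥ w is the inl part of w
      have hEw : E.mulVec w = w ∘ Sum.inl := by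
        rw [hE]
        have : w = Sum.elim (w ∘ Sum.inl) (w ∘ Sum.inr) := (Sum.elim_comp_inl_inr w).symm
        rw [this]
        rw [Matrix.fromCols_mulVec_sumElim]
        simp
      -- decompose Γ τ *ᵥ w
      have hdec : (Γ τ).mulVec w = (-B).mulVec (w ∘ Sum.inl) + (Ξ (τ+1)).mulVec (w ∘ Sum.inr) := by
        rw [hΓ τ hτ hτT]
        conv_lhs => rw [← Sum.elim_comp_inl_inr w]
        rw [Matrix.fromCols_mulVec_sumElim]
      refine ⟨w ∘ Sum.inr, ?_⟩
      have hcol : (fun i => X (τ+1) i j) = A.mulVec x + B.mulVec (fun i => U τ i j) := by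
        funext i
        rw [hdyn τ hτ hτT, Matrix.add_apply, col_mul A (X τ) j i, col_mul B (U τ) j i]
        rfl
      rw [hcol, hu, hEw]
      have := hΓw
      rw [hdec] at this
      have hneg : (-B).mulVec (w ∘ Sum.inl) = -(B.mulVec (w ∘ Sum.inl)) := by
        rw [Matrix.neg_mulVec]
      rw [hneg] at this
      -- this : -(B *ᵥ w∘inl) + Ξ(τ+1) *ᵥ w∘inr = A *ᵥ x
      linear_combination (norm := module) this
  -- conclude: columns of X (T+1) are in range of (Ξ (T+1)).mulVec = {0}
  have hXT1 : X (T + 1) = 0 := by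
    ext i j
    obtain ⟨θ, hθ⟩ := main (T + 1) (by omega) (by omega) j
    rw [hΞT] at hθ
    have : (0 : Matrix (Fin n) (Fin q) ℝ).mulVec θ = 0 := Matrix.zero_mulVec θ
    rw [this] at hθ
    have := congrFun hθ.symm i
    simpa using this
  rw [← hdyn T hT le_rfl, hXT1]
end
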